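/- Let A be any real n×n matrix and set B* = (I_n − J_n)·A·(I_n − J_n) + J_n. Then B* has all row sums and column sums equal to 1, and B* is the unique closest such matrix to A with respect to the Frobenius norm: for every real n×n matrix C all of whose row sums and column sums equal 1, ‖A − B*‖_F ≤ ‖A − C‖_F, with equality only if C = B*. -/

import Mathlib

/-- The matrix `J_n`: every entry equal to `1/n`. -/
noncomputable def Jmat (n : ℕ) : Matrix (Fin n) (Fin n) ℝ :=
  Matrix.of fun _ _ => (1 : ℝ) / n

/-- The Frobenius norm `‖M‖_F = sqrt (Σ_{i,j} m_{ij}²)`. -/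
noncomputable def frobNorm {n : ℕ} (M : Matrix (Fin n) (Fin n) ℝ) : ℝ :=
  Real.sqrt (∑ i, ∑ j, (M i j) ^ 2)

/-- For any real `n × n` matrix `A`, the matrix `B* = (I - J)·A·(I - J) + J` has all row
and column sums equal to `1`, and is the unique closest such matrix to `A` in the
Frobenius norm. -/
theorem stmt3 (n : ℕ) (A B : Matrix (Fin n) (Fin n) ℝ)
    (hB : B = (1 - Jmat n) * A * (1 - Jmat n) + Jmat n) :
    (∀ i, ∑ j, B i j = 1) ∧ (∀ j, ∑ i, B i j = 1) ∧
    (∀ C : Matrix (Fin n) (Fin n) ℝ,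
      (∀ i, ∑ j, C i j = 1) → (∀ j, ∑ i, C i j = 1) →
      frobNorm (A - B) ≤ frobNorm (A - C) ∧
      (frobNorm (A - B) = frobNorm (A - C) → C = B)) := by
  rcases Nat.eq_zero_or_pos n with hn | hn
  · subst hn
    refine ⟨fun i => i.elim0, fun j => j.elim0, fun C _ _ => ⟨?_, fun _ => ?_⟩⟩
    · simp [frobNorm]
    · ext i j; exact i.elim0
  have hnR : (0:ℝ) < n := by exact_mod_cast hn
  have hn0 : (n:ℝ) ≠ 0 := ne_of_gt hnR
  -- entry formulas
  have hJA : ∀ i j, (Jmat n * A) i j = (∑ k, A k j) / n := by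
    intro i j
    simp only [Matrix.mul_apply, Jmat, Matrix.of_apply, Finset.sum_div]
    exact Finset.sum_congr rfl (fun k _ => by ring)
  have hAJ : ∀ i j, (A * Jmat n) i j = (∑ k, A i k) / n := by
    intro i j
    simp only [Matrix.mul_apply, Jmat, Matrix.of_apply, Finset.sum_div]
    exact Finset.sum_congr rfl (fun k _ => by ring)
  have hJAJ : ∀ i j, (Jmat n * A * Jmat n) i j = (∑ k, ∑ l, A k l) / (n*n) := by
    intro i j
    simp only [Matrix.mul_apply, Jmat, Matrix.of_apply]
    rw [show ((∑ k, ∑ l, A k l):ℝ) = ∑ l, ∑ k, A k l from Finset.sum_comm, Finset.sum_div]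
    refine Finset.sum_congr rfl (fun k _ => ?_)
    rw [Finset.sum_mul, Finset.sum_div]
    refine Finset.sum_congr rfl (fun l _ => ?_)
    ring
  have hABmat : A - B = Jmat n * A + A * Jmat n - Jmat n * A * Jmat n - Jmat n := by
    rw [hB]; noncomm_ring
  have hAB : ∀ i j, A i j - B i j =
      (∑ k, A k j)/n + (∑ k, A i k)/n - (∑ k, ∑ l, A k l)/(n*n) - 1/n := by
    intro i j
    have hJe : ∀ i j : Fin n, Jmat n i j = 1/n := fun _ _ => rfl
    rw [show A i j - B i j = (A - B) i j from rfl, hABmat]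
    simp only [Matrix.sub_apply, Matrix.add_apply, hJA, hAJ, hJAJ, hJe]
  -- row and column sums of B
  have hBrow : ∀ i, ∑ j, B i j = 1 := by
    intro i
    have h1 : ∑ j, (A i j - B i j) = (∑ j, A i j) - 1 := by
      rw [Finset.sum_congr rfl (fun j _ => hAB i j)]
      simp only [Finset.sum_add_distrib, Finset.sum_sub_distrib, Finset.sum_const,
        Finset.card_univ, Fintype.card_fin, nsmul_eq_mul, ← Finset.sum_div]
      rw [Finset.sum_comm]
      field_simp
      ring
    have h2 : ∑ j, (A i j - B i j) = (∑ j, A i j) - ∑ j, B i j :=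
      Finset.sum_sub_distrib _ _
    linarith
  have hBcol : ∀ j, ∑ i, B i j = 1 := by
    intro j
    have h1 : ∑ i, (A i j - B i j) = (∑ i, A i j) - 1 := by
      rw [Finset.sum_congr rfl (fun i _ => hAB i j)]
      simp only [Finset.sum_add_distrib, Finset.sum_sub_distrib, Finset.sum_const,
        Finset.card_univ, Fintype.card_fin, nsmul_eq_mul, ← Finset.sum_div]
      field_simp
      ring
    have h2 : ∑ i, (A i j - B i j) = (∑ i, A i j) - ∑ i, B i j :=
      Finset.sum_sub_distrib _ _
    linarith
  refine ⟨hBrow, hBcol, fun C hC1 hC2 => ?_⟩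
  have hDrow : ∀ i, ∑ j, (C i j - B i j) = 0 := by
    intro i; rw [Finset.sum_sub_distrib, hC1 i, hBrow i]; ring
  have hDcol : ∀ j, ∑ i, (C i j - B i j) = 0 := by
    intro j; rw [Finset.sum_sub_distrib, hC2 j, hBcol j]; ring
  have t1 : ∑ i, ∑ j, (∑ k, A k j)/n * (C i j - B i j) = 0 := by
    rw [Finset.sum_comm]
    refine Finset.sum_eq_zero fun j _ => ?_
    rw [← Finset.mul_sum, hDcol j, mul_zero]
  have t2 : ∑ i, ∑ j, (∑ k, A i k)/n * (C i j - B i j) = 0 := by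
    refine Finset.sum_eq_zero fun i _ => ?_
    rw [← Finset.mul_sum, hDrow i, mul_zero]
  have t3 : ∑ i, ∑ j, ((∑ k, ∑ l, A k l)/(n*n) + 1/n) * (C i j - B i j) = 0 := by
    refine Finset.sum_eq_zero fun i _ => ?_
    rw [← Finset.mul_sum, hDrow i, mul_zero]
  have hcross : ∑ i, ∑ j, (A i j - B i j) * (C i j - B i j) = 0 := by
    have step : ∀ i j, (A i j - B i j) * (C i j - B i j) =
        (∑ k, A k j)/n * (C i j - B i j) + (∑ k, A i k)/n * (C i j - B i j)
          - ((∑ k, ∑ l, A k l)/(n*n) + 1/n) * (C i j - B i j) := by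
      intro i j; rw [hAB]; ring
    calc ∑ i, ∑ j, (A i j - B i j) * (C i j - B i j)
        = ∑ i, ∑ j, ((∑ k, A k j)/n * (C i j - B i j) + (∑ k, A i k)/n * (C i j - B i j)
          - ((∑ k, ∑ l, A k l)/(n*n) + 1/n) * (C i j - B i j)) :=
          Finset.sum_congr rfl fun i _ => Finset.sum_congr rfl fun j _ => step i j
      _ = 0 := by
          simp only [Finset.sum_add_distrib, Finset.sum_sub_distrib]
          rw [t1, t2, t3]; ring
  have hpy : ∑ i, ∑ j, (A i j - C i j)^2 =
      (∑ i, ∑ j, (A i j - B i j)^2) + ∑ i, ∑ j, (C i j - B i j)^2 := by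
    have step : ∀ i j, (A i j - C i j)^2 =
        (A i j - B i j)^2 - 2 * ((A i j - B i j) * (C i j - B i j)) + (C i j - B i j)^2 := by
      intro i j; ring
    calc ∑ i, ∑ j, (A i j - C i j)^2
        = ∑ i, ∑ j, ((A i j - B i j)^2 - 2 * ((A i j - B i j) * (C i j - B i j))
            + (C i j - B i j)^2) :=
          Finset.sum_congr rfl fun i _ => Finset.sum_congr rfl fun j _ => step i j
      _ = _ := by
          simp only [Finset.sum_add_distrib, Finset.sum_sub_distrib, ← Finset.mul_sum]
          rw [hcross]; ring
  have hD0 : 0 ≤ ∑ i, ∑ j, (C i j - B i j)^2 :=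
    Finset.sum_nonneg fun i _ => Finset.sum_nonneg fun j _ => sq_nonneg _
  have hAB0 : 0 ≤ ∑ i, ∑ j, (A i j - B i j)^2 :=
    Finset.sum_nonneg fun i _ => Finset.sum_nonneg fun j _ => sq_nonneg _
  have e1 : frobNorm (A - B) = Real.sqrt (∑ i, ∑ j, (A i j - B i j)^2) := by
    simp [frobNorm, Matrix.sub_apply]
  have e2 : frobNorm (A - C) = Real.sqrt (∑ i, ∑ j, (A i j - C i j)^2) := by
    simp [frobNorm, Matrix.sub_apply]
  constructor
  · rw [e1, e2]
    exact Real.sqrt_le_sqrt (by linarith)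
  · intro h
    rw [e1, e2] at h
    have hsum : (∑ i, ∑ j, (A i j - B i j)^2) = ∑ i, ∑ j, (A i j - C i j)^2 :=
      (Real.sqrt_inj hAB0 (by linarith)).mp h
    have hDzero : ∑ i, ∑ j, (C i j - B i j)^2 = 0 := by linarith
    ext i j
    have h1 := (Finset.sum_eq_zero_iff_of_nonneg
      (fun i _ => Finset.sum_nonneg fun j _ => sq_nonneg _)).mp hDzero i (Finset.mem_univ i)
    have h2 := (Finset.sum_eq_zero_iff_of_nonneg
      (fun j _ => sq_nonneg _)).mp h1 j (Finset.mem_univ j)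
    nlinarith [sq_nonneg (C i j - B i j)]
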